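/- Let N ≥ 1, b₁, …, b_N ∈ ℝ, let W : (0,∞) → ℝ be differentiable, and set V(q) = W(Σₗ qₗ²). Let q, q' ∈ (0,∞)^N, p, p' ∈ ℝ^N satisfy bₖ ≤ qₖ²·q'ₖ² and the update equations q'ₖ·√(1 − bₖ/(qₖ²·q'ₖ²)) + pₖ = 2·W'(Σₗ qₗ²)·qₖ and p'ₖ = qₖ·√(1 − bₖ/(qₖ²·q'ₖ²)) for each k. Then, with J₊(q,p) = Σₖ (pₖ² + bₖ/qₖ²), J₋(q,p) = Σₖ qₖ², J₃(q,p) = Σₖ qₖ·pₖ, the evolution of the generators closes on the sl₂ evolution map with f = W': (J₊(q',p'), J₋(q',p'), J₃(q',p')) = Φ_{W'}(J₊(q,p), J₋(q,p), J₃(q,p)), i.e. J₊(q',p') = J₋(q,p), J₋(q',p') = J₊(q,p) − 4·J₃(q,p)·W'(J₋(q,p)) + 4·J₋(q,p)·W'(J₋(q,p))², and J₃(q',p') = −J₃(q,p) + 2·J₋(q,p)·W'(J₋(q,p)). -/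

import Mathlib

open Finset

theorem sl2_closure_for_radial_potentials (N : ℕ) (hN : 1 ≤ N) (b : Fin N → ℝ)
    (W : ℝ → ℝ) (hW : ∀ x : ℝ, 0 < x → DifferentiableAt ℝ W x)
    (q q' p p' : Fin N → ℝ)
    (hq : ∀ k, 0 < q k) (hq' : ∀ k, 0 < q' k)
    (hb : ∀ k, b k ≤ (q k) ^ 2 * (q' k) ^ 2)
    (hup1 : ∀ k, q' k * Real.sqrt (1 - b k / ((q k) ^ 2 * (q' k) ^ 2)) + p k
        = 2 * deriv W (∑ l, (q l) ^ 2) * q k)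
    (hup2 : ∀ k, p' k = q k * Real.sqrt (1 - b k / ((q k) ^ 2 * (q' k) ^ 2))) :
    (∑ k, ((p' k) ^ 2 + b k / (q' k) ^ 2) = ∑ k, (q k) ^ 2)
    ∧ (∑ k, (q' k) ^ 2
        = (∑ k, ((p k) ^ 2 + b k / (q k) ^ 2))
          - 4 * (∑ k, q k * p k) * deriv W (∑ k, (q k) ^ 2)
          + 4 * (∑ k, (q k) ^ 2) * (deriv W (∑ k, (q k) ^ 2)) ^ 2)
    ∧ (∑ k, q' k * p' k
        = -(∑ k, q k * p k) + 2 * (∑ k, (q k) ^ 2) * deriv W (∑ k, (q k) ^ 2)) := by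
  set f := deriv W (∑ l, (q l) ^ 2) with hf
  have hs2 : ∀ k, (Real.sqrt (1 - b k / ((q k) ^ 2 * (q' k) ^ 2))) ^ 2
      = 1 - b k / ((q k) ^ 2 * (q' k) ^ 2) := by
    intro k
    apply Real.sq_sqrt
    have hpos : 0 < (q k) ^ 2 * (q' k) ^ 2 :=
      mul_pos (pow_pos (hq k) 2) (pow_pos (hq' k) 2)
    have : b k / ((q k) ^ 2 * (q' k) ^ 2) ≤ 1 := (div_le_one hpos).2 (hb k)
    linarith
  have hqk : ∀ k, (q k) ≠ 0 := fun k => (hq k).ne'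
  have hq'k : ∀ k, (q' k) ≠ 0 := fun k => (hq' k).ne'
  have key1 : ∀ k, (p' k) ^ 2 + b k / (q' k) ^ 2 = (q k) ^ 2 := by
    intro k
    rw [hup2 k, mul_pow, hs2 k]
    field_simp [hqk k, hq'k k]
    ring
  have key2 : ∀ k, q' k * Real.sqrt (1 - b k / ((q k) ^ 2 * (q' k) ^ 2))
      = 2 * f * q k - p k := by
    intro k; linarith [hup1 k]
  have key2' : ∀ k, (q' k) ^ 2
      = ((p k) ^ 2 + b k / (q k) ^ 2) - (q k * p k) * (4 * f) + (q k) ^ 2 * (4 * f ^ 2) := by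
    intro k
    have h := congrArg (· ^ 2) (key2 k)
    simp only [mul_pow, hs2 k] at h
    have hb' : (q' k) ^ 2 * (1 - b k / ((q k) ^ 2 * (q' k) ^ 2))
        = (q' k) ^ 2 - b k / (q k) ^ 2 := by
      field_simp [hqk k, hq'k k]
    rw [hb'] at h
    have : (q' k) ^ 2 = (2 * f * q k - p k) ^ 2 + b k / (q k) ^ 2 := by linarith
    rw [this]; ring
  have key3 : ∀ k, q' k * p' k = (q k) ^ 2 * (2 * f) - q k * p k := by
    intro k
    rw [hup2 k]
    have : q' k * (q k * Real.sqrt (1 - b k / ((q k) ^ 2 * (q' k) ^ 2)))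
        = q k * (q' k * Real.sqrt (1 - b k / ((q k) ^ 2 * (q' k) ^ 2))) := by ring
    rw [this, key2 k]; ring
  refine ⟨Finset.sum_congr rfl fun k _ => key1 k, ?_, ?_⟩
  · rw [Finset.sum_congr rfl fun k _ => key2' k]
    rw [Finset.sum_add_distrib, Finset.sum_sub_distrib, ← Finset.sum_mul, ← Finset.sum_mul]
    ring
  · rw [Finset.sum_congr rfl fun k _ => key3 k]
    rw [Finset.sum_sub_distrib, ← Finset.sum_mul]
    ring
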